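/- arXiv:1302.6668 — 4 statements merged into one kernel-verified Lean document; each statement's English description precedes it below -/
import Mathlib

section
/- Suppose G is a directed graph on vertex set V = {1,…,n} that is not strongly connected. Then there is no finite sequence A_1, …, A_T of row-stochastic matrices with positive diagonals, each consistent with G, such that the product A_T ⋯ A_1 is a rank-one stochastic matrix of the form 𝟙 v^T. (Strong connectivity is necessary for finite-time consensus.) -/
open Matrix Finset

def IsStochastic {n : ℕ} (A : Matrix (Fin n) (Fin n) ℝ) : Prop :=
  (∀ i j, 0 ≤ A i j) ∧ ∀ i, ∑ j, A i j = 1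

def PosDiag {n : ℕ} (A : Matrix (Fin n) (Fin n) ℝ) : Prop := ∀ i, 0 < A i i

/-- `A` is consistent with the directed graph `G`: an off-diagonal entry `A i j`
may be positive only if `(j, i)` is an arc of `G`. -/
def Consistent {n : ℕ} (G : Fin n → Fin n → Prop) (A : Matrix (Fin n) (Fin n) ℝ) : Prop :=
  ∀ i j, i ≠ j → 0 < A i j → G j i

lemma prod_nonneg' {n : ℕ} (L : List (Matrix (Fin n) (Fin n) ℝ))
    (h : ∀ A ∈ L, IsStochastic A) : ∀ a b, 0 ≤ L.prod a b := by
  induction L with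
  | nil => intro a b; simp [Matrix.one_apply]; split <;> norm_num
  | cons A l ih =>
    intro a b
    have hP := ih (fun B hB => h B (List.mem_cons_of_mem _ hB))
    have hA := h A List.mem_cons_self
    rw [List.prod_cons, Matrix.mul_apply]
    exact Finset.sum_nonneg fun k _ => mul_nonneg (hA.1 a k) (hP k b)

lemma prod_diag_pos {n : ℕ} (L : List (Matrix (Fin n) (Fin n) ℝ))
    (h : ∀ A ∈ L, IsStochastic A ∧ PosDiag A) : ∀ i, 0 < L.prod i i := by
  induction L with
  | nil => intro i; simp [Matrix.one_apply]
  | cons A l ih =>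
    intro i
    have hP := ih (fun B hB => h B (List.mem_cons_of_mem _ hB))
    have hA := h A List.mem_cons_self
    have hPn := prod_nonneg' l (fun B hB => (h B (List.mem_cons_of_mem _ hB)).1)
    rw [List.prod_cons, Matrix.mul_apply]
    apply Finset.sum_pos' (fun k _ => mul_nonneg (hA.1.1 i k) (hPn k i))
    exact ⟨i, Finset.mem_univ i, mul_pos (hA.2 i) (hP i)⟩

lemma prod_pos_reach {n : ℕ} (G : Fin n → Fin n → Prop)
    (L : List (Matrix (Fin n) (Fin n) ℝ))
    (h : ∀ A ∈ L, IsStochastic A ∧ Consistent G A) :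
    ∀ a b, 0 < L.prod a b → Relation.ReflTransGen G b a := by
  induction L with
  | nil =>
    intro a b hab
    rw [List.prod_nil, Matrix.one_apply] at hab
    by_cases hab' : a = b
    · subst hab'; exact Relation.ReflTransGen.refl
    · simp [hab'] at hab
  | cons A l ih =>
    intro a b hab
    have hl := fun B hB => h B (List.mem_cons_of_mem _ hB)
    have hA := h A List.mem_cons_self
    have hPn := prod_nonneg' l (fun B hB => (hl B hB).1)
    rw [List.prod_cons, Matrix.mul_apply] at hab
    have : ∃ k, 0 < A a k * l.prod k b := by
      by_contra hc
      push_neg at hc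
      have : ∑ k, A a k * l.prod k b ≤ 0 := Finset.sum_nonpos fun k _ => hc k
      linarith
    obtain ⟨k, hk⟩ := this
    have hAak : 0 < A a k := by
      rcases lt_or_ge 0 (A a k) with h' | h'
      · exact h'
      · nlinarith [hPn k b]
    have hPkb : 0 < l.prod k b := by
      nlinarith [hA.1.1 a k]
    have hkb := ih hl k b hPkb
    by_cases hak : a = k
    · subst hak; exact hkb
    · exact hkb.tail (hA.2 a k hak hAak)

theorem stmt_2 {n : ℕ} (G : Fin n → Fin n → Prop)
    (hG : ¬ ∀ i j : Fin n, Relation.ReflTransGen G i j) :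
    ¬ ∃ L : List (Matrix (Fin n) (Fin n) ℝ),
        (∀ A ∈ L, IsStochastic A ∧ PosDiag A ∧ Consistent G A) ∧
        ∃ v : Fin n → ℝ, (∀ i, 0 ≤ v i) ∧ (∑ i, v i = 1) ∧
          L.prod = Matrix.of (fun _ j => v j) := by
  push_neg at hG
  obtain ⟨i, j, hij⟩ := hG
  rintro ⟨L, hL, v, hv0, hv1, hLv⟩
  have hvi : 0 < v i := by
    have := prod_diag_pos L (fun A hA => ⟨(hL A hA).1, (hL A hA).2.1⟩) i
    rw [hLv] at this
    simpa using this
  have hPji : 0 < L.prod j i := by rw [hLv]; simpa using hvi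
  exact hij (prod_pos_reach G L (fun A hA => ⟨(hL A hA).1, (hL A hA).2.2⟩) j i hPji)
end

section
/- Let C_n be the directed cycle graph on n vertices (edges (i, i−1) for i = 2,…,n and edge (1,n)) with n even, and let A be a row-stochastic matrix with positive diagonal consistent with C_n. Let x ∈ ℝ^n and y = Ax (indices mod n). If there exists i such that x_i and x_{i+1} are both ≥ 0 or both ≤ 0, then there exists j such that y_j and y_{j+1} are both ≥ 0 or both ≤ 0. -/
open Matrix Finset

/-- `A` is consistent with the directed cycle `C_n`: the only off-diagonal entry
of row `i` that may be positive is in column `i + 1` (mod `n`). -/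
def CycleConsistent {n : ℕ} [NeZero n] (A : Matrix (Fin n) (Fin n) ℝ) : Prop :=
  ∀ i j : Fin n, i ≠ j → 0 < A i j → j = i + 1

open Fin.NatCast

theorem stmt_4 {n : ℕ} [NeZero n] (hn : Even n)
    (A : Matrix (Fin n) (Fin n) ℝ)
    (hA : IsStochastic A) (hD : PosDiag A) (hC : CycleConsistent A)
    (x : Fin n → ℝ) (y : Fin n → ℝ) (hy : y = A.mulVec x)
    (h : ∃ i : Fin n, (0 ≤ x i ∧ 0 ≤ x (i + 1)) ∨ (x i ≤ 0 ∧ x (i + 1) ≤ 0)) :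
    ∃ j : Fin n, (0 ≤ y j ∧ 0 ≤ y (j + 1)) ∨ (y j ≤ 0 ∧ y (j + 1) ≤ 0) := by
  by_contra hcon
  push_neg at hcon
  have h2n : 2 ≤ n := by
    rcases hn with ⟨m, hm⟩
    have := NeZero.pos n
    omega
  have hne1 : ∀ k : Fin n, k ≠ k + 1 := by
    intro k hk
    have h := congrArg Fin.val hk
    rw [Fin.val_add, Fin.val_one'] at h
    have hk1 : k.val < n := k.isLt
    have h1n : 1 % n = 1 := Nat.mod_eq_of_lt (by omega)
    rw [h1n] at h
    by_cases hlt : k.val + 1 < n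
    · rw [Nat.mod_eq_of_lt hlt] at h; omega
    · have hkn : k.val + 1 = n := by omega
      rw [hkn, Nat.mod_self] at h; omega
  have ykey : ∀ k : Fin n, y k = A k k * x k + A k (k + 1) * x (k + 1) := by
    intro k
    rw [hy]
    show ∑ j, A k j * x j = _
    have hsub : ∑ j, A k j * x j = ∑ j ∈ ({k, k + 1} : Finset (Fin n)), A k j * x j := by
      refine (Finset.sum_subset (Finset.subset_univ _) ?_).symm
      intro j _ hj
      simp only [Finset.mem_insert, Finset.mem_singleton, not_or] at hj
      have hz : A k j = 0 := by
        by_contra hz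
        have hpos : 0 < A k j := lt_of_le_of_ne (hA.1 k j) (Ne.symm hz)
        exact hj.2 (hC k j (fun hkj => hj.1 hkj.symm) hpos)
      rw [hz, zero_mul]
    rw [hsub, Finset.sum_pair (hne1 k)]
  -- strict alternation steps of y
  have hstep : ∀ (j : Fin n) (t : ℝ), t ≠ 0 → 0 ≤ t * y j → t * y (j + 1) < 0 := by
    intro j t ht h0
    obtain ⟨h1, h2⟩ := hcon j
    rcases lt_trichotomy t 0 with htl | rfl | htg
    · have hyj : y j ≤ 0 := by nlinarith
      have := h2 hyj
      nlinarith
    · exact absurd rfl ht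
    · have hyj : 0 ≤ y j := by nlinarith
      have := h1 hyj
      nlinarith
  obtain ⟨i, hi⟩ := h
  obtain ⟨s, hs, hx0, hx1⟩ : ∃ s : ℝ, s ≠ 0 ∧ 0 ≤ s * x i ∧ 0 ≤ s * x (i + 1) := by
    rcases hi with ⟨ha, hb⟩ | ⟨ha, hb⟩
    · exact ⟨1, one_ne_zero, by linarith, by linarith⟩
    · exact ⟨-1, by norm_num, by linarith, by linarith⟩
  have hy0 : 0 ≤ s * y i := by
    rw [ykey i]
    have hα := (hD i).le
    have hβ := hA.1 i (i + 1)
    nlinarith [mul_nonneg (mul_nonneg hα (le_of_eq rfl)) hx0]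
  have hyalt : ∀ k : ℕ, ((-1 : ℝ) ^ k * s) * y (i + 1 + (k : Fin n)) < 0 := by
    intro k
    induction k with
    | zero => simpa using hstep i s hs hy0
    | succ k ih =>
      have ht : ((-1 : ℝ) ^ (k + 1) * s) ≠ 0 := by
        exact mul_ne_zero (pow_ne_zero _ (by norm_num)) hs
      have h0 : 0 ≤ ((-1 : ℝ) ^ (k + 1) * s) * y (i + 1 + (k : Fin n)) := by
        have hrw : ((-1 : ℝ) ^ (k + 1) * s) = -((-1 : ℝ) ^ k * s) := by ring
        rw [hrw]
        nlinarith
      have := hstep (i + 1 + (k : Fin n)) _ ht h0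
      have hcast : (i + 1 + (k : Fin n)) + 1 = i + 1 + ((k + 1 : ℕ) : Fin n) := by
        push_cast
        open Fin.CommRing in ring
      rwa [hcast] at this
  have hxalt : ∀ k : ℕ, ((-1 : ℝ) ^ k * s) * x (i + 1 + 1 + (k : Fin n)) < 0 := by
    intro k
    induction k with
    | zero =>
      simp only [pow_zero, one_mul, Nat.cast_zero, add_zero]
      have hy1 : s * y (i + 1) < 0 := by simpa using hyalt 0
      have hyk := ykey (i + 1)
      have hα := hD (i + 1)
      have hβ := hA.1 (i + 1) (i + 1 + 1)
      by_contra hv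
      push_neg at hv
      have t1 : 0 ≤ A (i+1) (i+1) * (s * x (i + 1)) := mul_nonneg hα.le hx1
      have t2 : 0 ≤ A (i+1) (i+1+1) * (s * x (i + 1 + 1)) := mul_nonneg hβ hv
      have hexp : s * y (i + 1) = A (i+1) (i+1) * (s * x (i + 1)) + A (i+1) (i+1+1) * (s * x (i + 1 + 1)) := by
        rw [hyk]; ring
      linarith
    | succ k ih =>
      set j := i + 1 + 1 + (k : Fin n) with hj
      have hyj : ((-1 : ℝ) ^ (k + 1) * s) * y j < 0 := by
        have := hyalt (k + 1)
        have hidx : i + 1 + ((k + 1 : ℕ) : Fin n) = j := by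
          rw [hj]
          push_cast
          open Fin.CommRing in ring
        rwa [hidx] at this
      have hyk := ykey j
      have hα := hD j
      have hβ := hA.1 j (j + 1)
      have hidx2 : i + 1 + 1 + ((k + 1 : ℕ) : Fin n) = j + 1 := by
        rw [hj]
        push_cast
        open Fin.CommRing in ring
      rw [hidx2]
      by_contra hv
      push_neg at hv
      have hd : ((-1 : ℝ) ^ (k + 1) * s) = -((-1 : ℝ) ^ k * s) := by ring
      have t2 : 0 ≤ A j (j+1) * (((-1 : ℝ) ^ (k + 1) * s) * x (j + 1)) := mul_nonneg hβ hv
      have t1 : 0 < A j j * (((-1 : ℝ) ^ (k + 1) * s) * x j) := by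
        rw [hd]
        have : 0 < -(((-1 : ℝ) ^ k * s) * x j) := by linarith
        nlinarith
      have hexp : ((-1 : ℝ) ^ (k + 1) * s) * y j = A j j * (((-1 : ℝ) ^ (k + 1) * s) * x j) + A j (j+1) * (((-1 : ℝ) ^ (k + 1) * s) * x (j + 1)) := by
        rw [hyk]; ring
      linarith
  have hfin := hxalt (n - 2)
  have hevpow : ((-1 : ℝ)) ^ (n - 2) = 1 := by
    refine Even.neg_one_pow ?_
    rcases hn with ⟨m, rfl⟩
    have hm : m + m - 2 = (m - 1) + (m - 1) := by omega
    rw [hm]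
    exact ⟨m - 1, rfl⟩
  have hidx : i + 1 + 1 + ((n - 2 : ℕ) : Fin n) = i := by
    have hz : (1 : Fin n) + 1 + ((n - 2 : ℕ) : Fin n) = 0 := by
      have h1 : (1 : Fin n) = ((1 : ℕ) : Fin n) := by norm_cast
      rw [h1, ← Nat.cast_add, ← Nat.cast_add]
      have he : 1 + 1 + (n - 2) = n := by omega
      rw [he]
      exact Fin.natCast_self n
    calc i + 1 + 1 + ((n - 2 : ℕ) : Fin n) = i + ((1 : Fin n) + 1 + ((n - 2 : ℕ) : Fin n)) := by open Fin.CommRing in ring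
    _ = i := by rw [hz, add_zero]
  rw [hidx, hevpow, one_mul] at hfin
  linarith
end

section
/- If a directed graph G on n vertices contains a bidirectional spanning tree (i.e., there is an undirected spanning tree each of whose edges occurs in both directions in G), then there exists a finite sequence of at most n(n−1)/2 row-stochastic matrices with positive diagonals, each consistent with G, whose product equals (1/n)·𝟙𝟙^T. (Finite-time average consensus is achievable.) -/
open Matrix Finset

section Mat
variable {n : ℕ}

lemma sum_two_ite (z p : Fin n) (hzp : z ≠ p) (az ap : ℝ) (f : Fin n → ℝ) :
    ∑ k, (if k = z then az else if k = p then ap else 0) * f k = az * f z + ap * f p := by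
  have h : ∀ k, (if k = z then az else if k = p then ap else 0) * f k
      = (if k = z then az * f z else 0) + (if k = p then ap * f p else 0) := by
    intro k
    by_cases h1 : k = z
    · rw [if_pos h1, if_pos h1, if_neg (by rw [h1]; exact hzp), h1]; ring
    · by_cases h2 : k = p
      · rw [if_neg h1, if_neg h1, if_pos h2, if_pos h2, h2]; ring
      · rw [if_neg h1, if_neg h1, if_neg h2, if_neg h2]; ring
  rw [Finset.sum_congr rfl (fun k _ => h k), Finset.sum_add_distrib,
    Finset.sum_ite_eq' univ z, Finset.sum_ite_eq' univ p]
  simp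

def rowOp (z p : Fin n) (a b : ℝ) : Matrix (Fin n) (Fin n) ℝ :=
  Matrix.of fun i j =>
    if i = z then (if j = z then a else if j = p then 1 - a else 0)
    else if i = p then (if j = p then b else if j = z then 1 - b else 0)
    else if i = j then 1 else 0

lemma rowOp_mul_apply {z p : Fin n} (hzp : z ≠ p) (a b : ℝ) (R : Matrix (Fin n) (Fin n) ℝ)
    (i j : Fin n) :
    (rowOp z p a b * R) i j =
      if i = z then a * R z j + (1 - a) * R p j
      else if i = p then b * R p j + (1 - b) * R z j
      else R i j := by
  rw [Matrix.mul_apply]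
  by_cases h1 : i = z
  · rw [if_pos h1]
    have hk : ∀ k, rowOp z p a b i k * R k j
        = (if k = z then a else if k = p then (1-a) else 0) * R k j := by
      intro k; rw [show rowOp z p a b i k = (if k = z then a else if k = p then (1-a) else 0) from by
        simp only [rowOp, Matrix.of_apply, if_pos h1]]
    rw [Finset.sum_congr rfl (fun k _ => hk k), sum_two_ite z p hzp a (1-a) (fun k => R k j)]
  · rw [if_neg h1]
    by_cases h2 : i = p
    · rw [if_pos h2]
      have hk : ∀ k, rowOp z p a b i k * R k j
          = (if k = p then b else if k = z then (1-b) else 0) * R k j := by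
        intro k; rw [show rowOp z p a b i k = (if k = p then b else if k = z then (1-b) else 0) from by
          simp only [rowOp, Matrix.of_apply, if_neg h1, if_pos h2]]
      rw [Finset.sum_congr rfl (fun k _ => hk k),
        sum_two_ite p z (Ne.symm hzp) b (1-b) (fun k => R k j)]
    · rw [if_neg h2]
      have hk : ∀ k, rowOp z p a b i k * R k j = (if i = k then R k j else 0) := by
        intro k
        rw [show rowOp z p a b i k = (if i = k then 1 else 0) from by
          simp only [rowOp, Matrix.of_apply, if_neg h1, if_neg h2]]
        split_ifs <;> ring
      rw [Finset.sum_congr rfl (fun k _ => hk k), Finset.sum_ite_eq univ i (fun k => R k j),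
        if_pos (Finset.mem_univ i)]

lemma rowOp_stoch {z p : Fin n} (hzp : z ≠ p) {a b : ℝ}
    (ha : 0 < a) (ha1 : a ≤ 1) (hb : 0 < b) (hb1 : b ≤ 1) :
    IsStochastic (rowOp z p a b) := by
  constructor
  · intro i j
    simp only [rowOp, Matrix.of_apply]
    split_ifs <;> linarith
  · intro i
    by_cases h1 : i = z
    · have h : ∀ j, rowOp z p a b i j
          = (if j = z then a else if j = p then 1 - a else 0) * (fun _ => (1:ℝ)) j := by
        intro j; simp only [rowOp, Matrix.of_apply, if_pos h1, mul_one]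
      rw [Finset.sum_congr rfl fun j _ => h j, sum_two_ite z p hzp]
      ring
    · by_cases h2 : i = p
      · have h : ∀ j, rowOp z p a b i j
            = (if j = p then b else if j = z then 1 - b else 0) * (fun _ => (1:ℝ)) j := by
          intro j; simp only [rowOp, Matrix.of_apply, if_neg h1, if_pos h2, mul_one]
        rw [Finset.sum_congr rfl fun j _ => h j, sum_two_ite p z (Ne.symm hzp)]
        ring
      · have h : ∀ j, rowOp z p a b i j = if i = j then (fun _ => (1:ℝ)) j else 0 := by
          intro j; simp only [rowOp, Matrix.of_apply, if_neg h1, if_neg h2]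
        rw [Finset.sum_congr rfl fun j _ => h j, Finset.sum_ite_eq univ i (fun _ => (1:ℝ)),
          if_pos (Finset.mem_univ i)]

lemma rowOp_posdiag {z p : Fin n} (hzp : z ≠ p) {a b : ℝ} (ha : 0 < a) (hb : 0 < b) :
    PosDiag (rowOp z p a b) := by
  intro i
  by_cases h1 : i = z
  · simp only [rowOp, Matrix.of_apply, if_pos h1, h1]; simpa using ha
  · by_cases h2 : i = p
    · simp only [rowOp, Matrix.of_apply, if_neg h1, if_pos h2, h2]
      rw [if_neg (by rw [← h2]; exact fun hh => h1 hh)] at *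
      · simpa [← h2, h1] using hb
    · simp only [rowOp, Matrix.of_apply, if_neg h1, if_neg h2, if_pos rfl]
      exact one_pos

lemma rowOp_consistent {z p : Fin n} {a b : ℝ}
    {G : Fin n → Fin n → Prop} (hGzp : G z p) (hGpz : G p z) :
    Consistent G (rowOp z p a b) := by
  intro i j hij hpos
  simp only [rowOp, Matrix.of_apply] at hpos
  by_cases h1 : i = z
  · rw [if_pos h1] at hpos
    by_cases hjz : j = z
    · exact absurd (h1.trans hjz.symm) hij
    · rw [if_neg hjz] at hpos
      by_cases hjp : j = p
      · rw [h1, hjp]; exact hGpz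
      · rw [if_neg hjp] at hpos; exact (lt_irrefl _ hpos).elim
  · rw [if_neg h1] at hpos
    by_cases h2 : i = p
    · rw [if_pos h2] at hpos
      by_cases hjp : j = p
      · exact absurd (h2.trans hjp.symm) hij
      · rw [if_neg hjp] at hpos
        by_cases hjz : j = z
        · rw [h2, hjz]; exact hGzp
        · rw [if_neg hjz] at hpos; exact (lt_irrefl _ hpos).elim
    · rw [if_neg h2, if_neg (fun hh => hij hh)] at hpos
      exact (lt_irrefl _ hpos).elim

end Mat

section Supp
variable {n : ℕ}

def SuppW (M : Matrix (Fin n) (Fin n) ℝ) (S : Finset (Fin n)) : Prop :=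
  (∀ i, i ∉ S → ∀ j, M i j = if i = j then 1 else 0) ∧
  (∀ i ∈ S, ∀ j, j ∉ S → M i j = 0)

lemma suppW_one (S : Finset (Fin n)) : SuppW 1 S := by
  constructor
  · intro i _ j; rw [Matrix.one_apply]
  · intro i hi j hj
    rw [Matrix.one_apply, if_neg]
    intro h; rw [h] at hi; exact hj hi

lemma suppW_mono {M : Matrix (Fin n) (Fin n) ℝ} {S S' : Finset (Fin n)}
    (hSS : S ⊆ S') (h : SuppW M S) : SuppW M S' := by
  constructor
  · intro i hi j
    exact h.1 i (fun hh => hi (hSS hh)) j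
  · intro i hi j hj
    by_cases hiS : i ∈ S
    · exact h.2 i hiS j (fun hh => hj (hSS hh))
    · rw [h.1 i hiS j, if_neg]
      intro hh; rw [hh] at hi; exact hj hi

lemma suppW_mul {M N : Matrix (Fin n) (Fin n) ℝ} {S : Finset (Fin n)}
    (hM : SuppW M S) (hN : SuppW N S) : SuppW (M * N) S := by
  constructor
  · intro i hi j
    rw [Matrix.mul_apply]
    rw [Finset.sum_congr rfl (fun k _ => by rw [hM.1 i hi k])]
    rw [Finset.sum_congr rfl (fun k _ => by
      rw [show (if i = k then (1:ℝ) else 0) * N k j = if i = k then N k j else 0 from by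
        split_ifs <;> ring])]
    rw [Finset.sum_ite_eq univ i (fun k => N k j), if_pos (Finset.mem_univ i)]
    exact hN.1 i hi j
  · intro i hi j hj
    rw [Matrix.mul_apply]
    apply Finset.sum_eq_zero
    intro k _
    by_cases hk : k ∈ S
    · rw [hN.2 k hk j hj, mul_zero]
    · rw [hM.2 i hi k hk, zero_mul]

lemma suppW_listProd {L : List (Matrix (Fin n) (Fin n) ℝ)} {S : Finset (Fin n)}
    (h : ∀ A ∈ L, SuppW A S) : SuppW L.prod S := by
  induction L with
  | nil => exact suppW_one S
  | cons A L IH =>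
      rw [List.prod_cons]
      exact suppW_mul (h A (List.mem_cons_self)) (IH (fun B hB => h B (List.mem_cons_of_mem A hB)))

lemma suppW_rowOp {z p : Fin n} {S : Finset (Fin n)} (hz : z ∈ S) (hp : p ∈ S) (a b : ℝ) :
    SuppW (rowOp z p a b) S := by
  constructor
  · intro i hi j
    have h1 : i ≠ z := fun h => hi (h ▸ hz)
    have h2 : i ≠ p := fun h => hi (h ▸ hp)
    simp only [rowOp, Matrix.of_apply, if_neg h1, if_neg h2]
  · intro i hi j hj
    have h1 : j ≠ z := fun h => hj (h ▸ hz)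
    have h2 : j ≠ p := fun h => hj (h ▸ hp)
    have hij : i ≠ j := fun h => hj (h ▸ hi)
    simp only [rowOp, Matrix.of_apply, if_neg h1, if_neg h2, if_neg hij]
    split_ifs <;> rfl

lemma suppW_mul_row_congr {M X Y : Matrix (Fin n) (Fin n) ℝ} {S : Finset (Fin n)}
    (hM : SuppW M S) (h : ∀ v ∈ S, ∀ j, X v j = Y v j) :
    ∀ v ∈ S, ∀ j, (M * X) v j = (M * Y) v j := by
  intro v hv j
  rw [Matrix.mul_apply, Matrix.mul_apply]
  apply Finset.sum_congr rfl
  intro k _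
  by_cases hk : k ∈ S
  · rw [h k hk j]
  · rw [hM.2 v hv k hk, zero_mul, zero_mul]

lemma suppW_mul_row_out {M X : Matrix (Fin n) (Fin n) ℝ} {S : Finset (Fin n)}
    (hM : SuppW M S) {v : Fin n} (hv : v ∉ S) : ∀ j, (M * X) v j = X v j := by
  intro j
  rw [Matrix.mul_apply]
  rw [Finset.sum_congr rfl (fun k _ => by rw [hM.1 v hv k])]
  rw [Finset.sum_congr rfl (fun k _ => by
    rw [show (if v = k then (1:ℝ) else 0) * X k j = if v = k then X k j else 0 from by
      split_ifs <;> ring])]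
  rw [Finset.sum_ite_eq univ v (fun k => X k j), if_pos (Finset.mem_univ v)]

lemma rowsum_mul {A X : Matrix (Fin n) (Fin n) ℝ} (hA : ∀ i, ∑ j, A i j = 1)
    (hX : ∀ v, ∑ j, X v j = 1) : ∀ v, ∑ j, (A * X) v j = 1 := by
  intro v
  rw [Finset.sum_congr rfl (fun j _ => Matrix.mul_apply (M := A) (N := X))]
  rw [Finset.sum_comm]
  rw [Finset.sum_congr rfl (fun k _ => by rw [← Finset.mul_sum, hX k, mul_one])]
  exact hA v

lemma rowsum_listProd {L : List (Matrix (Fin n) (Fin n) ℝ)} {X : Matrix (Fin n) (Fin n) ℝ}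
    (hL : ∀ A ∈ L, ∀ i, ∑ j, A i j = 1) (hX : ∀ v, ∑ j, X v j = 1) :
    ∀ v, ∑ j, (L.prod * X) v j = 1 := by
  induction L with
  | nil => intro v; rw [List.prod_nil, Matrix.one_mul]; exact hX v
  | cons A L IH =>
      intro v
      rw [List.prod_cons, Matrix.mul_assoc]
      exact rowsum_mul (hL A (List.mem_cons_self))
        (IH (fun B hB => hL B (List.mem_cons_of_mem A hB))) v

end Supp

section Comb
variable {n : ℕ} (adj : Fin n → Fin n → Prop)

def StepIn (S : Finset (Fin n)) (a b : Fin n) : Prop := a ∈ S ∧ b ∈ S ∧ adj a b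

def ReachIn (S : Finset (Fin n)) : Fin n → Fin n → Prop :=
  Relation.ReflTransGen (StepIn adj S)

def Conn (S : Finset (Fin n)) : Prop := ∀ x ∈ S, ∀ y ∈ S, ReachIn adj S x y

def ReachN (S : Finset (Fin n)) : ℕ → Fin n → Fin n → Prop
  | 0, x, y => x = y
  | (k+1), x, y => ∃ w, (x ∈ S ∧ w ∈ S ∧ adj x w) ∧ ReachN S k w y

variable {adj}

lemma reachIn_of_reachN {S : Finset (Fin n)} :
    ∀ {k x y}, ReachN adj S k x y → ReachIn adj S x y := by
  intro k
  induction k with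
  | zero => intro x y h; cases h; exact Relation.ReflTransGen.refl
  | succ k IH =>
      rintro x y ⟨w, hs, hr⟩
      exact Relation.ReflTransGen.head hs (IH hr)

lemma reachN_of_reachIn {S : Finset (Fin n)} {x y : Fin n} (h : ReachIn adj S x y) :
    ∃ k, ReachN adj S k x y := by
  induction h using Relation.ReflTransGen.head_induction_on with
  | refl => exact ⟨0, rfl⟩
  | head hstep _ IH =>
      obtain ⟨k, hk⟩ := IH
      exact ⟨k + 1, _, hstep, hk⟩

lemma reachIn_symm (hsymm : ∀ {a b}, adj a b → adj b a) {S : Finset (Fin n)} {x y : Fin n}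
    (h : ReachIn adj S x y) : ReachIn adj S y x := by
  have : Symmetric (StepIn adj S) := by
    rintro a b ⟨ha, hb, hab⟩; exact ⟨hb, ha, hsymm hab⟩
  exact @Std.Symm.symm _ (Relation.ReflTransGen (StepIn adj S)) (@Relation.ReflTransGen.stdSymm _ _ ⟨fun _ _ hh => this hh⟩) _ _ h

open Classical in
lemma exists_peel (hsymm : ∀ {a b}, adj a b → adj b a) (hirr : ∀ x, ¬ adj x x)
    {S : Finset (Fin n)} (hconn : Conn adj S) {r : Fin n} (hr : r ∈ S)
    (h2 : 2 ≤ S.card) :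
    ∃ z p, z ∈ S ∧ p ∈ S ∧ z ≠ r ∧ p ≠ z ∧ adj z p ∧ Conn adj (S.erase z) := by
  classical
  have hex : ∀ x, ∃ k, (x ∈ S → ReachN adj S k x r) := by
    intro x
    by_cases hx : x ∈ S
    · obtain ⟨k, hk⟩ := reachN_of_reachIn (hconn x hx r hr)
      exact ⟨k, fun _ => hk⟩
    · exact ⟨0, fun h => absurd h hx⟩
  let d : Fin n → ℕ := fun x => Nat.find (hex x)
  have hdspec : ∀ x, x ∈ S → ReachN adj S (d x) x r := fun x hx => Nat.find_spec (hex x) hx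
  have hdle : ∀ x k, ReachN adj S k x r → d x ≤ k := by
    intro x k hk
    exact Nat.find_le (fun _ => hk)
  have hdr : d r = 0 := Nat.le_zero.mp (hdle r 0 rfl)
  have hd_ne : ∀ x ∈ S, x ≠ r → 1 ≤ d x := by
    intro x hx hxr
    by_contra h
    have h0 : d x = 0 := by omega
    have := hdspec x hx
    rw [h0] at this
    exact hxr this
  obtain ⟨z, hz, hzmax⟩ := Finset.exists_max_image S d ⟨r, hr⟩
  obtain ⟨x, hx, y, hy, hxy⟩ := Finset.one_lt_card (s := S) |>.mp (by omega)
  have hex_ne : ∃ x ∈ S, x ≠ r := by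
    by_cases hxr : x = r
    · exact ⟨y, hy, by rw [← hxr]; exact hxy.symm⟩
    · exact ⟨x, hx, hxr⟩
  obtain ⟨x₀, hx₀, hx₀r⟩ := hex_ne
  have hdz1 : 1 ≤ d z := le_trans (hd_ne x₀ hx₀ hx₀r) (hzmax x₀ hx₀)
  have hzr : z ≠ r := by
    intro h; rw [h, hdr] at hdz1; omega
  obtain ⟨m, hm⟩ : ∃ m, d z = m + 1 := ⟨d z - 1, by omega⟩
  have hspec := hdspec z hz
  rw [hm] at hspec
  obtain ⟨p, ⟨hzS, hpS, hadj⟩, hpr⟩ := hspec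
  have hpz : p ≠ z := by
    intro h; rw [h] at hadj; exact hirr z hadj
  -- r stays
  have hrS' : r ∈ S.erase z := Finset.mem_erase.mpr ⟨Ne.symm hzr, hr⟩
  -- everyone in S.erase z reaches r within S.erase z
  have key : ∀ N, ∀ x ∈ S.erase z, d x ≤ N → ReachIn adj (S.erase z) x r := by
    intro N
    induction N with
    | zero =>
        intro x hx hdx
        have h0 : d x = 0 := by omega
        have hxS := (Finset.mem_erase.mp hx).2
        have hxr : x = r := by have := hdspec x hxS; rwa [h0] at this
        rw [hxr]; exact Relation.ReflTransGen.refl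
    | succ N IH =>
        intro x hx hdx
        have hxS := (Finset.mem_erase.mp hx).2
        have hxz := (Finset.mem_erase.mp hx).1
        by_cases hxr : x = r
        · rw [hxr]; exact Relation.ReflTransGen.refl
        · have h1 : 1 ≤ d x := hd_ne x hxS hxr
          obtain ⟨m', hm'⟩ : ∃ m', d x = m' + 1 := ⟨d x - 1, by omega⟩
          have hspec' := hdspec x hxS
          rw [hm'] at hspec'
          obtain ⟨w, ⟨_, hwS, hadjw⟩, hwr⟩ := hspec'
          have hdw : d w ≤ m' := hdle w m' hwr
          have hwz : w ≠ z := by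
            intro h
            rw [h] at hdw
            have : d x ≤ d z := hzmax x hxS
            omega
          have hw' : w ∈ S.erase z := Finset.mem_erase.mpr ⟨hwz, hwS⟩
          have hstep : StepIn adj (S.erase z) x w := ⟨hx, hw', hadjw⟩
          have : d w ≤ N := by omega
          exact Relation.ReflTransGen.head hstep (IH w hw' this)
  refine ⟨z, p, hz, hpS, hzr, hpz, hadj, ?_⟩
  intro x hx y hy
  have h1 : ReachIn adj (S.erase z) x r := key (d x) x hx le_rfl
  have h2' : ReachIn adj (S.erase z) y r := key (d y) y hy le_rfl
  exact h1.trans (reachIn_symm hsymm h2')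

end Comb

section Sweep
variable {n : ℕ} {adj G : Fin n → Fin n → Prop}

set_option maxHeartbeats 2000000 in
lemma sweep (hsymm : ∀ {a b : Fin n}, adj a b → adj b a) (hirr : ∀ x, ¬ adj x x)
    (hG : ∀ x y, adj x y → G x y) :
    ∀ (k : ℕ) (S : Finset (Fin n)), S.card = k + 2 → Conn adj S →
    ∀ (r : Fin n), r ∈ S → ∀ (D : Finset (Fin n)), D ⊆ S →
    ∀ (R : Matrix (Fin n) (Fin n) ℝ) (lam : Fin n → ℝ),
    (∀ v ∈ S, 0 < lam v) → (∑ v ∈ S, lam v = 1) →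
    ∃ L : List (Matrix (Fin n) (Fin n) ℝ),
      L.length = k + 1 ∧
      (∀ A ∈ L, IsStochastic A ∧ PosDiag A ∧ Consistent G A ∧ SuppW A S) ∧
      (∀ j, (L.prod * R) r j = ∑ v ∈ S, lam v * R v j) ∧
      ∃ sig : Fin n → ℝ, (∀ w ∈ D, 0 < sig w) ∧ (∀ w, w ∉ D → sig w = 0) ∧
      ∃ mu : Fin n → ℝ, (∀ y ∈ S.erase r, 0 < mu y) ∧ (∀ y, y ∉ S.erase r → mu y = 0) ∧
      ∀ j, (∑ y ∈ S.erase r, mu y * ((L.prod * R) y j))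
          = (∑ v ∈ S, lam v * R v j) - ∑ w ∈ D, sig w * (R w j - ∑ v ∈ S, lam v * R v j) := by
  intro k
  induction k with
  | zero =>
    intro S hcard hconn r hr D hD R lam hlam hsum
    -- S has exactly two elements: r and w
    obtain ⟨x, y, hxy, hSxy⟩ := Finset.card_eq_two.mp hcard
    have hOnly : ∀ v ∈ S, v = x ∨ v = y := by
      intro v hv; rw [hSxy] at hv; simpa using hv
    obtain ⟨w, hw, hwr, hS⟩ : ∃ w, w ∈ S ∧ w ≠ r ∧ S = {w, r} := by
      rcases hOnly r hr with h | h
      · refine ⟨y, by rw [hSxy]; simp, by rw [← h] at hxy; exact fun hh => hxy hh.symm, ?_⟩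
        rw [hSxy, ← h]; exact Finset.pair_comm r y
      · refine ⟨x, by rw [hSxy]; simp, by rw [← h] at hxy; exact hxy, ?_⟩
        rw [hSxy, ← h]
    have hadj : adj w r := by
      have hreach := hconn w hw r hr
      rcases Relation.ReflTransGen.cases_head hreach with h | ⟨c, ⟨_, hcS, hadj'⟩, _⟩
      · exact absurd h hwr
      · rcases hOnly c hcS with h | h
        · -- c = x; needs c vs w: derive c = w or c = r from hS
          have : c ∈ ({w, r} : Finset (Fin n)) := by rw [← hS]; exact hcS
          simp at this
          rcases this with h' | h'
          · rw [h'] at hadj'; exact absurd hadj' (hirr w)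
          · rwa [h'] at hadj'
        · have : c ∈ ({w, r} : Finset (Fin n)) := by rw [← hS]; exact hcS
          simp at this
          rcases this with h' | h'
          · rw [h'] at hadj'; exact absurd hadj' (hirr w)
          · rwa [h'] at hadj'
    have hsum' : lam w + lam r = 1 := by
      rw [hS] at hsum; rwa [Finset.sum_pair hwr] at hsum
    have hlw : 0 < lam w := hlam w hw
    have hlr : 0 < lam r := hlam r hr
    set m : ℝ := min (lam w) (lam r) / 4 with hm
    have hm0 : 0 < m := by positivity
    set σw : ℝ := if w ∈ D then m else 0 with hσw
    set σr : ℝ := if r ∈ D then m else 0 with hσr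
    have hσw0 : 0 ≤ σw := by rw [hσw]; split_ifs <;> [linarith; rfl]
    have hσr0 : 0 ≤ σr := by rw [hσr]; split_ifs <;> [linarith; rfl]
    have hσwle : σw ≤ lam w / 4 := by
      rw [hσw]; split_ifs
      · rw [hm]; have := min_le_left (lam w) (lam r); linarith
      · linarith
    have hσrle : σr ≤ lam r / 4 := by
      rw [hσr]; split_ifs
      · rw [hm]; have := min_le_right (lam w) (lam r); linarith
      · linarith
    set d : ℝ := (1 + σw + σr) * lam w - σw with hd
    have hd0 : 0 < d := by
      rw [hd]; nlinarith
    have hd1 : d ≤ 1 := by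
      rw [hd]; nlinarith
    have hlr1 : lam r ≤ 1 := by linarith
    refine ⟨[rowOp w r d (lam r)], rfl, ?_, ?_, ?_⟩
    · intro A hA
      rw [List.mem_singleton] at hA
      subst hA
      exact ⟨rowOp_stoch hwr hd0 hd1 hlr hlr1,
        rowOp_posdiag hwr hd0 hlr,
        rowOp_consistent (hG w r hadj) (hG r w (hsymm hadj)),
        suppW_rowOp hw hr _ _⟩
    · intro j
      rw [List.prod_singleton, rowOp_mul_apply hwr, if_neg (Ne.symm hwr), if_pos rfl]
      rw [hS, Finset.sum_pair hwr]
      linear_combination (-(R w j)) * hsum'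
    · refine ⟨fun v => if v = w then σw else if v = r then σr else 0, ?_, ?_, ?_⟩
      · intro v hv
        simp only []
        have hvS : v ∈ ({w, r} : Finset (Fin n)) := by rw [← hS]; exact hD hv
        simp at hvS
        rcases hvS with h' | h'
        · rw [if_pos h', hσw, if_pos (h' ▸ hv)]; exact hm0
        · subst h'
          rw [if_neg (Ne.symm hwr), if_pos rfl, hσr, if_pos hv]; exact hm0
      · intro v hv
        simp only []
        by_cases h1 : v = w
        · rw [if_pos h1, hσw, if_neg (h1 ▸ hv)]
        · rw [if_neg h1]
          by_cases h2 : v = r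
          · rw [if_pos h2, hσr, if_neg (h2 ▸ hv)]
          · rw [if_neg h2]
      · refine ⟨fun y => if y = w then 1 else 0, ?_, ?_, ?_⟩
        · intro y hy
          simp only []
          have hyS := Finset.mem_erase.mp hy
          have : y ∈ ({w, r} : Finset (Fin n)) := by rw [← hS]; exact hyS.2
          simp at this
          rcases this with h | h
          · rw [if_pos h]; exact one_pos
          · exact absurd h hyS.1
        · intro y hy
          simp only []
          rw [if_neg]
          intro h
          exact hy (Finset.mem_erase.mpr ⟨h ▸ hwr, h ▸ hw⟩)
        · intro j
          simp only []
          have hτpair : (∑ v ∈ S, lam v * R v j) = lam w * R w j + lam r * R r j := by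
            rw [hS, Finset.sum_pair hwr]
          have hErase : S.erase r = {w} := by
            rw [hS]; ext v
            simp only [Finset.mem_erase, Finset.mem_insert, Finset.mem_singleton]
            constructor
            · rintro ⟨h1, h2 | h2⟩
              · exact h2
              · exact absurd h2 h1
            · intro h; exact ⟨h ▸ hwr, Or.inl h⟩
          rw [hErase, Finset.sum_singleton, if_pos rfl, one_mul]
          rw [List.prod_singleton, rowOp_mul_apply hwr, if_pos rfl]
          have hDsum : ∑ v ∈ D, (if v = w then σw else if v = r then σr else 0) * (R v j - ∑ v ∈ S, lam v * R v j)
              = ∑ v ∈ S, (if v = w then σw else if v = r then σr else 0) * (R v j - ∑ v ∈ S, lam v * R v j) := by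
            apply Finset.sum_subset hD
            intro v hvS hvD
            by_cases h1 : v = w
            · rw [if_pos h1, hσw, if_neg (h1 ▸ hvD), zero_mul]
            · rw [if_neg h1]
              by_cases h2 : v = r
              · rw [if_pos h2, hσr, if_neg (h2 ▸ hvD), zero_mul]
              · rw [if_neg h2, zero_mul]
          rw [hDsum]
          have hSsum : ∑ v ∈ S, (if v = w then σw else if v = r then σr else 0) * (R v j - ∑ v ∈ S, lam v * R v j)
              = σw * (R w j - ∑ v ∈ S, lam v * R v j) + σr * (R r j - ∑ v ∈ S, lam v * R v j) := by
            rw [hS, Finset.sum_pair hwr, if_pos rfl, if_neg (Ne.symm hwr), if_pos rfl]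
          rw [hSsum, hτpair, hd]
          linear_combination (-(1 + σw + σr) * R r j) * hsum'
  | succ k IH =>
    intro S hcard hconn r hr D hD R lam hlam hsum
    obtain ⟨z, p, hz, hp, hzr, hpz, hadj, hconn'⟩ :=
      exists_peel (adj := adj) hsymm hirr hconn hr (by omega)
    have hzp : z ≠ p := Ne.symm hpz
    have hlz : 0 < lam z := hlam z hz
    have hlp : 0 < lam p := hlam p hp
    have hlzp : 0 < lam z + lam p := by linarith
    set c : ℝ := lam p / (lam z + lam p) with hc
    have hc0 : 0 < c := div_pos hlp hlzp
    have hc1 : c < 1 := by rw [hc, div_lt_one hlzp]; linarith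
    set pooled : Fin n → ℝ := fun j => c * R p j + (1 - c) * R z j with hpooled
    set R' := Matrix.updateRow R p pooled with hR'
    set lam' := Function.update lam p (lam z + lam p) with hlam'def
    set S' := S.erase z with hS'
    have hcard' : S'.card = k + 2 := by
      rw [hS', Finset.card_erase_of_mem hz, hcard]
      omega
    have hr' : r ∈ S' := Finset.mem_erase.mpr ⟨Ne.symm hzr, hr⟩
    have hpS' : p ∈ S' := Finset.mem_erase.mpr ⟨hpz, hp⟩
    have hzS' : z ∉ S' := Finset.notMem_erase z S
    set D' := insert p (D.erase z) with hD'def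
    have hD' : D' ⊆ S' := by
      rw [hD'def]
      apply Finset.insert_subset hpS'
      intro w hw
      have hw' := Finset.mem_erase.mp hw
      exact Finset.mem_erase.mpr ⟨hw'.1, hD hw'.2⟩
    have hlam'pos : ∀ v ∈ S', 0 < lam' v := by
      intro v hv
      by_cases hvp : v = p
      · rw [hvp, hlam'def, Function.update_self]; exact hlzp
      · rw [hlam'def, Function.update_of_ne hvp]
        exact hlam v (Finset.mem_of_mem_erase hv)
    have hsum' : ∑ v ∈ S', lam' v = 1 := by
      have e1 : ∑ v ∈ S'.erase p, lam' v = ∑ v ∈ S'.erase p, lam v :=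
        Finset.sum_congr rfl (fun v hv => by
          rw [hlam'def, Function.update_of_ne (Finset.mem_erase.mp hv).1])
      calc ∑ v ∈ S', lam' v
          = ∑ v ∈ S'.erase p, lam' v + lam' p := (Finset.sum_erase_add S' lam' hpS').symm
        _ = ∑ v ∈ S'.erase p, lam v + (lam z + lam p) := by
            rw [e1, hlam'def, Function.update_self]
        _ = (∑ v ∈ S'.erase p, lam v + lam p) + lam z := by ring
        _ = ∑ v ∈ S', lam v + lam z := by rw [Finset.sum_erase_add S' lam hpS']
        _ = ∑ v ∈ S, lam v := by rw [hS', Finset.sum_erase_add S lam hz]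
        _ = 1 := hsum
    have hτ : ∀ j, ∑ v ∈ S', lam' v * R' v j = ∑ v ∈ S, lam v * R v j := by
      intro j
      have e1 : ∑ v ∈ S'.erase p, lam' v * R' v j = ∑ v ∈ S'.erase p, lam v * R v j := by
        apply Finset.sum_congr rfl
        intro v hv
        have hvp := (Finset.mem_erase.mp hv).1
        rw [hlam'def, Function.update_of_ne hvp, hR', Matrix.updateRow_ne hvp]
      have e2 : lam' p * R' p j = lam p * R p j + lam z * R z j := by
        rw [hlam'def, Function.update_self, hR', Matrix.updateRow_self, hpooled]
        simp only []
        rw [hc]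
        have hne : lam z + lam p ≠ 0 := ne_of_gt hlzp
        field_simp
        ring
      calc ∑ v ∈ S', lam' v * R' v j
          = ∑ v ∈ S'.erase p, lam' v * R' v j + lam' p * R' p j :=
            (Finset.sum_erase_add _ _ hpS').symm
        _ = ∑ v ∈ S'.erase p, lam v * R v j + (lam p * R p j + lam z * R z j) := by
            rw [e1, e2]
        _ = (∑ v ∈ S'.erase p, lam v * R v j + lam p * R p j) + lam z * R z j := by ring
        _ = ∑ v ∈ S', lam v * R v j + lam z * R z j := by
            rw [Finset.sum_erase_add S' (fun v => lam v * R v j) hpS']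
        _ = ∑ v ∈ S, lam v * R v j := by
            rw [hS', Finset.sum_erase_add S (fun v => lam v * R v j) hz]
    obtain ⟨L', hlen', hmats', hrow', sig', hsig'pos, hsig'zero, mu', hmu'pos, hmu'zero, hid'⟩ :=
      IH S' hcard' hconn' r hr' D' hD' R' lam' hlam'pos hsum'
    set s := sig' p with hs_def
    have hs : 0 < s := hsig'pos p (Finset.mem_insert_self p _)
    have h1s : (0:ℝ) < 1 + s := by linarith
    obtain ⟨t, d, ht0, ht1, hd0, hd1, hσzfact, hσppfact⟩ :
        ∃ t d : ℝ, 0 < t ∧ t < 1 ∧ 0 < d ∧ d ≤ 1 ∧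
          (if z ∈ D then 0 < (1-t)*s*(1-c) - t*d else (1-t)*s*(1-c) - t*d = 0) ∧
          (if p ∈ D then 0 < (1-t)*s*c - t*(1-d) else (1-t)*s*c - t*(1-d) = 0) := by
      have h2s : (0:ℝ) < 2*(1+s) := by linarith
      by_cases hzD : z ∈ D <;> by_cases hpD : p ∈ D
      · refine ⟨s/(2*(1+s)), 1-c, div_pos hs h2s, ?_, by linarith, by linarith, ?_, ?_⟩
        · rw [div_lt_one h2s]; linarith
        · rw [if_pos hzD]
          have key : (1 - s/(2*(1+s)))*s - s/(2*(1+s)) = s/2 := by field_simp; ring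
          have e : (1 - s/(2*(1+s)))*s*(1-c) - (s/(2*(1+s)))*(1-c)
              = (1-c) * ((1 - s/(2*(1+s)))*s - s/(2*(1+s))) := by ring
          rw [e, key]
          have : (0:ℝ) < 1 - c := by linarith
          nlinarith
        · rw [if_pos hpD]
          have key : (1 - s/(2*(1+s)))*s - s/(2*(1+s)) = s/2 := by field_simp; ring
          have e : (1 - s/(2*(1+s)))*s*c - (s/(2*(1+s)))*(1-(1-c))
              = c * ((1 - s/(2*(1+s)))*s - s/(2*(1+s))) := by ring
          rw [e, key]
          nlinarith
      · -- z ∈ D, p ∉ D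
        have hcs : (0:ℝ) < 1 + c*s := by nlinarith
        have hlt : c*s/(1+c*s) < s/(1+s) := by
          rw [div_lt_div_iff₀ hcs h1s]; nlinarith
        have htlo0 : 0 < c*s/(1+c*s) := div_pos (by nlinarith) hcs
        have htbar1 : s/(1+s) < 1 := by rw [div_lt_one h1s]; linarith
        set t := (c*s/(1+c*s) + s/(1+s))/2 with ht_def
        have ht0 : 0 < t := by rw [ht_def]; linarith
        have htlt : c*s/(1+c*s) < t := by rw [ht_def]; linarith
        have httbar : t < s/(1+s) := by rw [ht_def]; linarith
        have ht1 : t < 1 := by linarith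
        have hkey : (1-t)*s*c < t := by
          have h1 : t*(1+c*s) > c*s := by
            have := (div_lt_iff₀ hcs).mp htlt
            linarith
          nlinarith
        have hkey2 : t*(1+s) < s := by
          have := (lt_div_iff₀ h1s).mp httbar
          linarith
        set d := 1 - (1-t)*s*c/t with hd_def
        have hfrac1 : (1-t)*s*c/t < 1 := by rw [div_lt_one ht0]; exact hkey
        have hfrac0 : 0 ≤ (1-t)*s*c/t := by
          apply div_nonneg _ (le_of_lt ht0)
          nlinarith
        have htd : t*d = t - (1-t)*s*c := by rw [hd_def]; field_simp
        refine ⟨t, d, ht0, ht1, by rw [hd_def]; linarith, by rw [hd_def]; linarith, ?_, ?_⟩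
        · rw [if_pos hzD]
          have e : (1-t)*s*(1-c) - t*d = (1-t)*s - t := by
            rw [htd]; ring
          rw [e]; nlinarith
        · rw [if_neg hpD]
          have e : (1-t)*s*c - t*(1-d) = (1-t)*s*c - (t - t*d) := by ring
          rw [e, htd]; ring
      · -- z ∉ D, p ∈ D
        have h1c : (0:ℝ) < 1 - c := by linarith
        have hcs : (0:ℝ) < 1 + (1-c)*s := by nlinarith
        have hlt : (1-c)*s/(1+(1-c)*s) < s/(1+s) := by
          rw [div_lt_div_iff₀ hcs h1s]; nlinarith
        have htlo0 : 0 < (1-c)*s/(1+(1-c)*s) := div_pos (by nlinarith) hcs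
        set t := ((1-c)*s/(1+(1-c)*s) + s/(1+s))/2 with ht_def
        have htbar1 : s/(1+s) < 1 := by rw [div_lt_one h1s]; linarith
        have ht0 : 0 < t := by rw [ht_def]; linarith
        have htlt : (1-c)*s/(1+(1-c)*s) < t := by rw [ht_def]; linarith
        have httbar : t < s/(1+s) := by rw [ht_def]; linarith
        have ht1 : t < 1 := by linarith
        have hkey : (1-t)*s*(1-c) < t := by
          have h1 : t*(1+(1-c)*s) > (1-c)*s := by
            have := (div_lt_iff₀ hcs).mp htlt
            linarith
          nlinarith
        have hkey2 : t*(1+s) < s := by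
          have := (lt_div_iff₀ h1s).mp httbar
          linarith
        set d := (1-t)*s*(1-c)/t with hd_def
        have hd0' : 0 < d := by
          apply div_pos _ ht0
          have : (0:ℝ) < 1 - t := by linarith
          nlinarith
        have hd1' : d ≤ 1 := by
          rw [hd_def, div_le_one ht0]; linarith
        have htd : t*d = (1-t)*s*(1-c) := by rw [hd_def]; field_simp
        refine ⟨t, d, ht0, ht1, hd0', hd1', ?_, ?_⟩
        · rw [if_neg hzD]
          rw [show (1-t)*s*(1-c) - t*d = (1-t)*s*(1-c) - ((1-t)*s*(1-c)) from by rw [htd]]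
          ring
        · rw [if_pos hpD]
          have e : (1-t)*s*c - t*(1-d) = (1-t)*s*c - t + t*d := by ring
          rw [e, htd]; nlinarith
      · -- neither
        refine ⟨s/(1+s), 1-c, div_pos hs h1s, by rw [div_lt_one h1s]; linarith,
          by linarith, by linarith, ?_, ?_⟩
        · rw [if_neg hzD]
          have key : (1 - s/(1+s))*s - s/(1+s) = 0 := by field_simp; ring
          calc (1 - s/(1+s))*s*(1-c) - (s/(1+s))*(1-c)
              = (1-c)*((1 - s/(1+s))*s - s/(1+s)) := by ring
            _ = 0 := by rw [key]; ring
        · rw [if_neg hpD]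
          have key : (1 - s/(1+s))*s - s/(1+s) = 0 := by field_simp; ring
          calc (1 - s/(1+s))*s*c - (s/(1+s))*(1-(1-c))
              = c*((1 - s/(1+s))*s - s/(1+s)) := by ring
            _ = 0 := by rw [key]; ring
    set σz := (1-t)*s*(1-c) - t*d with hσz_def
    set σpp := (1-t)*s*c - t*(1-d) with hσpp_def
    set op1 := rowOp z p d c with hop1
    have hprod : (L' ++ [op1]).prod = L'.prod * op1 := by
      rw [List.prod_append, List.prod_singleton]
    have hM : SuppW L'.prod S' := suppW_listProd (fun A hA => (hmats' A hA).2.2.2)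
    have hQ : ∀ v ∈ S', ∀ j, (op1 * R) v j = R' v j := by
      intro v hv j
      rw [hop1, rowOp_mul_apply hzp]
      have hvz : v ≠ z := (Finset.mem_erase.mp hv).1
      rw [if_neg hvz]
      by_cases hvp : v = p
      · rw [if_pos hvp, hR', hvp, Matrix.updateRow_self, hpooled]
      · rw [if_neg hvp, hR', Matrix.updateRow_ne hvp]
    have hPrw : ∀ v ∈ S', ∀ j, ((L' ++ [op1]).prod * R) v j = (L'.prod * R') v j := by
      intro v hv j
      rw [hprod, Matrix.mul_assoc]
      exact suppW_mul_row_congr hM hQ v hv j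
    have hPz : ∀ j, ((L' ++ [op1]).prod * R) z j = d * R z j + (1-d) * R p j := by
      intro j
      rw [hprod, Matrix.mul_assoc, suppW_mul_row_out hM hzS', hop1,
        rowOp_mul_apply hzp, if_pos rfl]
    refine ⟨L' ++ [op1], ?_, ?_, ?_, ?_⟩
    · rw [List.length_append, hlen']
      rfl
    · intro A hA
      rcases List.mem_append.mp hA with h | h
      · obtain ⟨h1, h2, h3, h4⟩ := hmats' A h
        exact ⟨h1, h2, h3, suppW_mono (Finset.erase_subset z S) h4⟩
      · rw [List.mem_singleton] at h
        subst h
        exact ⟨rowOp_stoch hzp hd0 hd1 hc0 (le_of_lt hc1),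
          rowOp_posdiag hzp hd0 hc0,
          rowOp_consistent (hG z p hadj) (hG p z (hsymm hadj)),
          suppW_rowOp hz hp _ _⟩
    · intro j
      rw [hPrw r hr' j, hrow' j, hτ j]
    refine ⟨fun w => if w = z then σz else if w = p then σpp else (1-t) * sig' w, ?_, ?_, ?_⟩
    · intro w hw
      simp only []
      by_cases h1 : w = z
      · rw [if_pos h1]
        have hf := hσzfact
        rw [if_pos (show z ∈ D by rw [← h1]; exact hw)] at hf
        exact hf
      · rw [if_neg h1]
        by_cases h2 : w = p
        · rw [if_pos h2]
          have hf := hσppfact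
          rw [if_pos (show p ∈ D by rw [← h2]; exact hw)] at hf
          exact hf
        · rw [if_neg h2]
          have hw' : w ∈ D' := by
            rw [hD'def]
            exact Finset.mem_insert_of_mem (Finset.mem_erase.mpr ⟨h1, hw⟩)
          exact mul_pos (by linarith) (hsig'pos w hw')
    · intro w hw
      simp only []
      by_cases h1 : w = z
      · rw [if_pos h1]
        have hf := hσzfact
        rw [if_neg (show z ∉ D from fun hh => hw (by rw [h1]; exact hh))] at hf
        exact hf
      · rw [if_neg h1]
        by_cases h2 : w = p
        · rw [if_pos h2]
          have hf := hσppfact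
          rw [if_neg (show p ∉ D from fun hh => hw (by rw [h2]; exact hh))] at hf
          exact hf
        · rw [if_neg h2]
          have hw' : w ∉ D' := by
            rw [hD'def]
            intro hmem
            rcases Finset.mem_insert.mp hmem with h | h
            · exact h2 h
            · exact hw (Finset.mem_erase.mp h).2
          rw [hsig'zero w hw', mul_zero]
    refine ⟨fun y => if y = z then t else (1-t) * mu' y, ?_, ?_, ?_⟩
    · intro y hy
      simp only []
      by_cases h1 : y = z
      · rw [if_pos h1]; exact ht0
      · rw [if_neg h1]
        have h2 := Finset.mem_erase.mp hy
        have hy' : y ∈ S'.erase r :=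
          Finset.mem_erase.mpr ⟨h2.1, Finset.mem_erase.mpr ⟨h1, h2.2⟩⟩
        exact mul_pos (by linarith) (hmu'pos y hy')
    · intro y hy
      simp only []
      have h1 : y ≠ z := by
        intro h
        exact hy (by rw [h]; exact Finset.mem_erase.mpr ⟨hzr, hz⟩)
      rw [if_neg h1]
      have hy' : y ∉ S'.erase r := by
        intro hmem
        apply hy
        have h2 := Finset.mem_erase.mp hmem
        have h3 := Finset.mem_erase.mp h2.2
        exact Finset.mem_erase.mpr ⟨h2.1, h3.2⟩
      rw [hmu'zero y hy', mul_zero]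
    intro j
    simp only []
    have hid2 := hid' j
    rw [hτ j] at hid2
    set T := ∑ v ∈ S, lam v * R v j with hT
    set E := (D.erase z).erase p with hE
    have hzSr : z ∈ S.erase r := Finset.mem_erase.mpr ⟨hzr, hz⟩
    -- L1 : split LHS
    have L1 : ∑ y ∈ S.erase r, (if y = z then t else (1-t) * mu' y) * ((L' ++ [op1]).prod * R) y j
        = t * (d * R z j + (1-d) * R p j)
          + (1-t) * ∑ y ∈ S'.erase r, mu' y * (L'.prod * R') y j := by
      rw [← Finset.sum_erase_add (S.erase r) _ hzSr, if_pos rfl, hPz j]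
      have hcomm : (S.erase r).erase z = S'.erase r := by
        rw [hS']
        ext v
        simp only [Finset.mem_erase]
        tauto
      rw [hcomm]
      rw [Finset.mul_sum]
      have : ∀ y ∈ S'.erase r,
          (if y = z then t else (1-t) * mu' y) * ((L' ++ [op1]).prod * R) y j
          = (1-t) * (mu' y * (L'.prod * R') y j) := by
        intro y hy
        have hyz : y ≠ z := by
          intro h
          have := (Finset.mem_erase.mp (Finset.mem_erase.mp hy).2).1
          exact this h
        have hyS' : y ∈ S' := (Finset.mem_erase.mp hy).2
        rw [if_neg hyz, hPrw y hyS' j, mul_assoc]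
      rw [Finset.sum_congr rfl this]
      ring
    -- L2 : split the D' sum
    have hpD' : p ∈ D' := by rw [hD'def]; exact Finset.mem_insert_self p _
    have hD'E : D'.erase p = E := by
      rw [hD'def, hE]
      ext v
      simp only [Finset.mem_erase, Finset.mem_insert]
      tauto
    have L2 : ∑ w ∈ D', sig' w * (R' w j - T)
        = s * ((c * R p j + (1-c) * R z j) - T) + ∑ w ∈ E, sig' w * (R w j - T) := by
      rw [← Finset.sum_erase_add D' _ hpD', hD'E]
      have e1 : R' p j = c * R p j + (1-c) * R z j := by
        rw [hR', Matrix.updateRow_self, hpooled]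
      have e2 : ∀ w ∈ E, sig' w * (R' w j - T) = sig' w * (R w j - T) := by
        intro w hw
        have hwp : w ≠ p := (Finset.mem_erase.mp (hE ▸ hw)).1
        rw [hR', Matrix.updateRow_ne hwp]
      rw [Finset.sum_congr rfl e2, e1, hs_def]
      ring
    -- L3 : split the D sum
    have hzE : z ∉ insert p E := by
      rw [Finset.mem_insert]
      rintro (h | h)
      · exact hzp h
      · rw [hE] at h
        exact (Finset.mem_erase.mp (Finset.mem_erase.mp h).2).1 rfl
    have hpE : p ∉ E := by
      rw [hE]
      intro h
      exact (Finset.mem_erase.mp h).1 rfl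
    have hDbig : D ⊆ insert z (insert p E) := by
      intro w hw
      rw [Finset.mem_insert, Finset.mem_insert]
      by_cases h1 : w = z
      · exact Or.inl h1
      · by_cases h2 : w = p
        · exact Or.inr (Or.inl h2)
        · exact Or.inr (Or.inr (by
            rw [hE]
            exact Finset.mem_erase.mpr ⟨h2, Finset.mem_erase.mpr ⟨h1, hw⟩⟩))
    have L3 : ∑ w ∈ D, (if w = z then σz else if w = p then σpp else (1-t) * sig' w) * (R w j - T)
        = σz * (R z j - T) + σpp * (R p j - T)
          + (1-t) * ∑ w ∈ E, sig' w * (R w j - T) := by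
      rw [Finset.sum_subset hDbig (by
        intro w hwbig hwD
        by_cases h1 : w = z
        · rw [if_pos h1]
          have hf := hσzfact
          rw [if_neg (show z ∉ D from fun hh => hwD (by rw [h1]; exact hh))] at hf
          rw [hσz_def] at hf ⊢
          rw [hf, zero_mul]
        · rw [if_neg h1]
          by_cases h2 : w = p
          · rw [if_pos h2]
            have hf := hσppfact
            rw [if_neg (show p ∉ D from fun hh => hwD (by rw [h2]; exact hh))] at hf
            rw [hσpp_def] at hf ⊢
            rw [hf, zero_mul]
          · exfalso
            rcases Finset.mem_insert.mp hwbig with h | h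
            · exact h1 h
            · rcases Finset.mem_insert.mp h with h' | h'
              · exact h2 h'
              · rw [hE] at h'
                exact hwD (Finset.mem_erase.mp (Finset.mem_erase.mp h').2).2)]
      rw [Finset.sum_insert hzE, Finset.sum_insert hpE, if_pos rfl,
        if_neg (Ne.symm hzp), if_pos rfl]
      have e3 : ∀ w ∈ E, (if w = z then σz else if w = p then σpp else (1-t) * sig' w) * (R w j - T)
          = (1-t) * (sig' w * (R w j - T)) := by
        intro w hw
        have h1 : w ≠ p := by
          intro h; rw [h] at hw; exact hpE hw
        have h2 : w ≠ z := by
          intro h; rw [hE] at hw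
          exact (Finset.mem_erase.mp (Finset.mem_erase.mp hw).2).1 h
        rw [if_neg h2, if_neg h1, mul_assoc]
      rw [Finset.sum_congr rfl e3, ← Finset.mul_sum]
      ring
    rw [L1, hid2, L2, L3, hσz_def, hσpp_def]
    ring



end Sweep

section ML
variable {n : ℕ} {adj G : Fin n → Fin n → Prop}

set_option maxHeartbeats 1000000 in
lemma mainLemma (hsymm : ∀ {a b : Fin n}, adj a b → adj b a) (hirr : ∀ x, ¬ adj x x)
    (hG : ∀ x y, adj x y → G x y) :
    ∀ (k : ℕ) (S : Finset (Fin n)), S.card = k → Conn adj S →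
    ∀ (R : Matrix (Fin n) (Fin n) ℝ) (lam : Fin n → ℝ),
    (∀ v ∈ S, 0 < lam v) → (∑ v ∈ S, lam v = 1) → (∀ v, ∑ j, R v j = 1) →
    ∃ L : List (Matrix (Fin n) (Fin n) ℝ),
      L.length ≤ k * (k - 1) / 2 ∧
      (∀ A ∈ L, IsStochastic A ∧ PosDiag A ∧ Consistent G A ∧ SuppW A S) ∧
      (∀ v ∈ S, ∀ j, (L.prod * R) v j = ∑ w ∈ S, lam w * R w j) := by
  intro k
  induction k with
  | zero =>
      intro S hcard _ R lam _ _ _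
      refine ⟨[], by simp, by simp, ?_⟩
      intro v hv
      rw [Finset.card_eq_zero.mp hcard] at hv
      exact absurd hv (Finset.notMem_empty v)
  | succ k IH =>
      intro S hcard hconn R lam hlam hsum hrows
      by_cases hk : k = 0
      · subst hk
        obtain ⟨v₀, hv₀⟩ := Finset.card_eq_one.mp hcard
        refine ⟨[], by simp, by simp, ?_⟩
        intro v hv j
        rw [hv₀] at hv hsum ⊢
        rw [Finset.mem_singleton] at hv
        subst hv
        rw [Finset.sum_singleton] at hsum
        rw [Finset.sum_singleton, List.prod_nil, Matrix.one_mul, hsum, one_mul]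
      · obtain ⟨m, hm⟩ : ∃ m, k = m + 1 := ⟨k - 1, by omega⟩
        have hne : S.Nonempty := by rw [← Finset.card_pos, hcard]; omega
        obtain ⟨r₀, hr₀⟩ := hne
        obtain ⟨rr, pp, hrrS, _, _, _, _, hconn'⟩ :=
          exists_peel (adj := adj) hsymm hirr hconn hr₀ (by omega)
        obtain ⟨L₁, hlen₁, hmats₁, hrow₁, sig, _, _, mu, hmupos, hmuzero, hid⟩ :=
          sweep (adj := adj) (G := G) hsymm hirr hG m S (by omega) hconn rr hrrS ∅ (Finset.empty_subset S)
            R lam hlam hsum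
        have hid0 : ∀ j, ∑ y ∈ S.erase rr, mu y * ((L₁.prod * R)) y j
            = ∑ v ∈ S, lam v * R v j := by
          intro j
          have h := hid j
          simpa using h
        have hrowsP : ∀ v, ∑ j, (L₁.prod * R) v j = 1 :=
          rowsum_listProd (fun A hA => ((hmats₁ A hA).1).2) hrows
        have hmusum : ∑ y ∈ S.erase rr, mu y = 1 := by
          have h1 : ∑ y ∈ S.erase rr, (∑ j, mu y * (L₁.prod * R) y j)
              = ∑ j, ∑ v ∈ S, lam v * R v j := by
            rw [Finset.sum_comm]
            exact Finset.sum_congr rfl (fun j _ => hid0 j)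
          have h2 : ∀ y ∈ S.erase rr, ∑ j, mu y * (L₁.prod * R) y j = mu y := by
            intro y _
            rw [← Finset.mul_sum, hrowsP y, mul_one]
          have h3 : ∑ j, ∑ v ∈ S, lam v * R v j = 1 := by
            rw [Finset.sum_comm]
            rw [Finset.sum_congr rfl (fun v _ => by rw [← Finset.mul_sum, hrows v, mul_one])]
            exact hsum
          rw [Finset.sum_congr rfl h2] at h1
          rw [h1, h3]
        obtain ⟨L₂, hlen₂, hmats₂, hP₂⟩ :=
          IH (S.erase rr) (by rw [Finset.card_erase_of_mem hrrS, hcard]; omega) hconn'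
            (L₁.prod * R) mu hmupos hmusum hrowsP
        have hM₂ : SuppW L₂.prod (S.erase rr) :=
          suppW_listProd (fun A hA => (hmats₂ A hA).2.2.2)
        refine ⟨L₂ ++ L₁, ?_, ?_, ?_⟩
        · rw [List.length_append, hlen₁]
          have hb : (m+2) * (m+2-1) / 2 = (m+1) * (m+1-1) / 2 + (m + 1) := by
            have e : (m+2) * (m+1) = (m+1) * m + (m+1) * 2 := by ring
            have e1 : m + 2 - 1 = m + 1 := by omega
            have e2 : m + 1 - 1 = m := by omega
            rw [e1, e2, e, Nat.add_mul_div_right _ _ (by norm_num : 0 < 2)]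
          have hk2 : k + 1 = m + 2 := by omega
          rw [hk2, hb]
          have : L₂.length ≤ (m+1) * (m+1-1) / 2 := by
            rw [← hm]; exact hlen₂
          omega
        · intro A hA
          rcases List.mem_append.mp hA with h | h
          · obtain ⟨h1, h2, h3, h4⟩ := hmats₂ A h
            exact ⟨h1, h2, h3, suppW_mono (Finset.erase_subset rr S) h4⟩
          · exact hmats₁ A h
        · intro v hv j
          rw [List.prod_append, Matrix.mul_assoc]
          by_cases hvr : v = rr
          · subst hvr
            rw [suppW_mul_row_out hM₂ (Finset.notMem_erase v S)]
            exact hrow₁ j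
          · have hv' : v ∈ S.erase rr := Finset.mem_erase.mpr ⟨hvr, hv⟩
            rw [hP₂ v hv' j, hid0 j]

end ML


theorem stmt_6 {n : ℕ} [NeZero n] (G : Fin n → Fin n → Prop)
    (T : SimpleGraph (Fin n)) (hT : T.IsTree)
    (hTG : ∀ i j : Fin n, T.Adj i j → G i j) :
    ∃ L : List (Matrix (Fin n) (Fin n) ℝ),
      L.length ≤ n * (n - 1) / 2 ∧
      (∀ A ∈ L, IsStochastic A ∧ PosDiag A ∧ Consistent G A) ∧
      L.prod = Matrix.of (fun _ _ => (1 : ℝ) / n) := by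
  have hsymm : ∀ {a b : Fin n}, T.Adj a b → T.Adj b a := fun h => h.symm
  have hirr : ∀ x, ¬ T.Adj x x := fun x => T.irrefl (v := x)
  have hwalk : ∀ (x y : Fin n), T.Walk x y → ReachIn T.Adj univ x y := by
    intro x y w
    induction w with
    | nil => exact Relation.ReflTransGen.refl
    | cons h _ IHw =>
        exact Relation.ReflTransGen.head ⟨Finset.mem_univ _, Finset.mem_univ _, h⟩ IHw
  have hconn : Conn T.Adj (univ : Finset (Fin n)) := by
    intro x _ y _
    obtain ⟨w⟩ := hT.isConnected.preconnected x y
    exact hwalk x y w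
  have hn0 : (n:ℝ) ≠ 0 := by
    exact_mod_cast Nat.pos_of_ne_zero (NeZero.ne n) |>.ne'
  have hnpos : (0:ℝ) < n := by
    exact_mod_cast Nat.pos_of_ne_zero (NeZero.ne n)
  have hrows : ∀ v : Fin n, ∑ j, (1 : Matrix (Fin n) (Fin n) ℝ) v j = 1 := by
    intro v
    simp [Matrix.one_apply]
  have hsum : ∑ _v ∈ (univ : Finset (Fin n)), (1:ℝ)/n = 1 := by
    rw [Finset.sum_const, Finset.card_univ, Fintype.card_fin, nsmul_eq_mul]
    field_simp
  obtain ⟨L, hlen, hmats, hP⟩ :=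
    mainLemma (adj := T.Adj) (G := G) hsymm hirr hTG n univ
      (by rw [Finset.card_univ, Fintype.card_fin]) hconn 1 (fun _ => 1/n)
      (fun v _ => by positivity) hsum hrows
  refine ⟨L, hlen, ?_, ?_⟩
  · intro A hA
    obtain ⟨h1, h2, h3, _⟩ := hmats A hA
    exact ⟨h1, h2, h3⟩
  · ext i j
    have h := hP i (Finset.mem_univ i) j
    rw [Matrix.mul_one] at h
    rw [h, Matrix.of_apply]
    have : ∀ w : Fin n, (1:ℝ)/n * (1 : Matrix (Fin n) (Fin n) ℝ) w j
        = if w = j then (1:ℝ)/n else 0 := by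
      intro w
      rw [Matrix.one_apply]
      split_ifs <;> ring
    rw [Finset.sum_congr rfl (fun w _ => this w), Finset.sum_ite_eq' univ j,
      if_pos (Finset.mem_univ j)]
end

section
/- Let n be even and C_n the directed n-cycle. If x ∈ ℝ^n has two cyclically consecutive coordinates weakly on the same side of some value c ∈ ℝ (i.e., x_i − c and x_{i+1} − c are both ≥ 0 or both ≤ 0 for some i), then for any finite sequence A_1,…,A_T of row-stochastic matrices with positive diagonals consistent with C_n, the vector x(T) = A_T⋯A_1 x also has two cyclically consecutive coordinates weakly on the same side of c. -/
open Matrix Finset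

lemma sign_trans {u d e : ℝ} (h1 : 0 < u * d) (h2 : d * e < 0) : u * e < 0 := by
  rcases lt_trichotomy d 0 with h | h | h
  · have hu : u < 0 := by nlinarith
    have he : 0 < e := by nlinarith
    nlinarith
  · subst h; simp at h1
  · have hu : 0 < u := by nlinarith
    have he : e < 0 := by nlinarith
    nlinarith

lemma sign_trans2p {u d v e : ℝ} (h1 : 0 < u * d) (h2 : 0 < v * e) (h3 : d * e < 0) :
    u * v < 0 := by
  rcases lt_trichotomy d 0 with h | h | h
  · have hu : u < 0 := by nlinarith
    have he : 0 < e := by nlinarith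
    have hv : 0 < v := by nlinarith
    nlinarith
  · subst h; simp at h1
  · have hu : 0 < u := by nlinarith
    have he : e < 0 := by nlinarith
    have hv : v < 0 := by nlinarith
    nlinarith

lemma sign_trans2n {u d v e : ℝ} (h1 : u * d < 0) (h2 : v * e < 0) (h3 : d * e < 0) :
    u * v < 0 := by
  rcases lt_trichotomy d 0 with h | h | h
  · have hu : 0 < u := by nlinarith
    have he : 0 < e := by nlinarith
    have hv : v < 0 := by nlinarith
    nlinarith
  · subst h; simp at h1
  · have hu : u < 0 := by nlinarith
    have he : e < 0 := by nlinarith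
    have hv : 0 < v := by nlinarith
    nlinarith

lemma decomp {n : ℕ} [NeZero n] (hone : ∀ j : Fin n, j + 1 ≠ j)
    (A : Matrix (Fin n) (Fin n) ℝ) (hS : IsStochastic A) (hC : CycleConsistent A)
    (y : Fin n → ℝ) (j : Fin n) :
    A.mulVec y j = A j j * y j + A j (j + 1) * y (j + 1) ∧ A j j + A j (j + 1) = 1 := by
  have hzero : ∀ k, k ≠ j → k ≠ j + 1 → A j k = 0 := by
    intro k hk hk1
    rcases lt_or_eq_of_le (hS.1 j k) with h | h
    · exact absurd (hC j k (Ne.symm hk) h) hk1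
    · exact h.symm
  have hsum : ∀ f : Fin n → ℝ, (∑ k, A j k * f k) = A j j * f j + A j (j + 1) * f (j + 1) := by
    intro f
    rw [← Finset.sum_subset (Finset.subset_univ {j, j + 1})]
    · rw [Finset.sum_pair (Ne.symm (hone j))]
    · intro k _ hk
      simp only [Finset.mem_insert, Finset.mem_singleton, not_or] at hk
      rw [hzero k hk.1 hk.2, zero_mul]
  constructor
  · simpa [Matrix.mulVec, dotProduct] using hsum y
  · have h1 := hS.2 j
    have h2 : (∑ k, A j k) = A j j + A j (j + 1) := by
      simpa using hsum (fun _ => (1 : ℝ))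
    rw [← h2]; exact h1

open Fin.NatCast in
lemma step {n : ℕ} [NeZero n] (hone : ∀ j : Fin n, j + 1 ≠ j) (c : ℝ)
    (A : Matrix (Fin n) (Fin n) ℝ) (hS : IsStochastic A) (hP : PosDiag A)
    (hC : CycleConsistent A) (y : Fin n → ℝ)
    (hy : ∃ i : Fin n, 0 ≤ (y i - c) * (y (i + 1) - c)) :
    ∃ j : Fin n, 0 ≤ (A.mulVec y j - c) * (A.mulVec y (j + 1) - c) := by
  by_contra hcon
  push_neg at hcon
  set z := A.mulVec y with hz
  obtain ⟨i, hi⟩ := hy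
  have hdec : ∀ j, z j - c = A j j * (y j - c) + A j (j + 1) * (y (j + 1) - c) := by
    intro j
    obtain ⟨h1, h2⟩ := decomp hone A hS hC y j
    rw [hz, h1]
    linear_combination c * h2
  have key : ∀ j, (y j - c) * (z j - c) ≤ 0 → 0 < (y (j + 1) - c) * (z j - c) := by
    intro j h
    have hd := hdec j
    have hz0 : z j - c ≠ 0 := by
      intro h0
      have hc := hcon j
      rw [h0, zero_mul] at hc
      exact lt_irrefl 0 hc
    have ha := hP j
    have hb := hS.1 j (j + 1)
    by_contra hv
    push_neg at hv
    have hdd : (z j - c) * (z j - c) =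
        A j j * ((y j - c) * (z j - c)) + A j (j + 1) * ((y (j + 1) - c) * (z j - c)) := by
      linear_combination (z j - c) * hd
    nlinarith [mul_self_pos.mpr hz0, mul_nonpos_of_nonneg_of_nonpos ha.le h,
      mul_nonpos_of_nonneg_of_nonpos hb hv]
  have prop : ∀ j : Fin n, (y j - c) * (z j - c) ≤ 0 →
      ∀ m : ℕ, (y (j + 1 + (m : Fin n)) - c) * (z (j + 1 + (m : Fin n)) - c) < 0 := by
    intro j hj m
    induction m with
    | zero =>
      simp only [Nat.cast_zero, add_zero]
      exact sign_trans (key j hj) (hcon j)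
    | succ m ih =>
      have h2 : j + 1 + ((m + 1 : ℕ) : Fin n) = (j + 1 + (m : ℕ)) + 1 := by
        push_cast; abel
      rw [h2]
      exact sign_trans (key _ ih.le) (hcon _)
  by_cases hall : ∀ k, 0 < (y k - c) * (z k - c)
  · have := sign_trans2p (hall i) (hall (i + 1)) (hcon i)
    linarith
  · push_neg at hall
    obtain ⟨j, hj⟩ := hall
    have hneg : ∀ k, (y k - c) * (z k - c) < 0 := by
      intro k
      have h := prop j hj ((k - (j + 1)).val)
      rwa [Fin.cast_val_eq_self, show j + 1 + (k - (j + 1)) = k by abel] at h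
    have := sign_trans2n (hneg i) (hneg (i + 1)) (hcon i)
    linarith

theorem stmt_16 {n : ℕ} [NeZero n] (hn : Even n) (c : ℝ)
    (L : List (Matrix (Fin n) (Fin n) ℝ))
    (hL : ∀ A ∈ L, IsStochastic A ∧ PosDiag A ∧ CycleConsistent A)
    (x : Fin n → ℝ)
    (hx : ∃ i : Fin n, 0 ≤ (x i - c) * (x (i + 1) - c)) :
    ∃ j : Fin n,
      0 ≤ (L.prod.mulVec x j - c) * (L.prod.mulVec x (j + 1) - c) := by
  have hone : ∀ j : Fin n, j + 1 ≠ j := by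
    intro j h
    have h' : j + 1 = j + 0 := by rw [add_zero]; exact h
    have h1 : (1 : Fin n) = 0 := add_left_cancel h'
    rw [Fin.one_eq_zero_iff] at h1
    exact Nat.not_even_one (h1 ▸ hn)
  revert hL
  induction L with
  | nil =>
    intro _
    simpa [Matrix.one_mulVec] using hx
  | cons A L ih =>
    intro hL
    have hA := hL A (List.mem_cons_self)
    have hy := ih (fun B hB => hL B (List.mem_cons_of_mem A hB))
    rw [List.prod_cons, ← Matrix.mulVec_mulVec]
    exact step hone c A hA.1 hA.2.1 hA.2.2 _ hy
end
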